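/- For every odd prime p, the sum over a from 1 to p-1 of the Fermat quotients q_p(a) is congruent to the Wilson quotient w_p modulo p; equivalently, (∑_{a=1}^{p-1} a^(p-1)) - p - (p-1)! ≡ 0 (mod p²). -/

import Mathlib

/-- Product of terms ≡ 1 mod n is ≡ 1 + sum of (term - 1) mod n². -/
lemma lerch_prod_aux (n : ℤ) (s : Finset ℕ) (f : ℕ → ℤ)
    (h : ∀ i ∈ s, n ∣ f i - 1) :
    n ^ 2 ∣ (∏ i ∈ s, f i) - (1 + ∑ i ∈ s, (f i - 1)) := by
  classical
  induction s using Finset.induction_on with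
  | empty => simp
  | @insert a s ha ih =>
    rw [Finset.prod_insert ha, Finset.sum_insert ha]
    obtain ⟨d, hd⟩ := h a (Finset.mem_insert_self a s)
    obtain ⟨c, hc⟩ := ih (fun i hi => h i (Finset.mem_insert_of_mem hi))
    obtain ⟨e, he⟩ := Finset.dvd_sum (fun i hi => h i (Finset.mem_insert_of_mem hi))
      (f := fun i => f i - 1)
    refine ⟨c + e * d + n * d * c, ?_⟩
    have hfa : f a = 1 + n * d := by linarith
    have hP : (∏ i ∈ s, f i) = 1 + (∑ i ∈ s, (f i - 1)) + n ^ 2 * c := by linarith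
    rw [hfa, hP, he]
    ring

/-- If n ∣ t then (t-1)^k ≡ (-1)^k (1 - k t) mod n². -/
lemma lerch_pow_aux (n t : ℤ) (h : n ∣ t) (k : ℕ) :
    n ^ 2 ∣ (t - 1) ^ k - (-1) ^ k * (1 - (k : ℤ) * t) := by
  obtain ⟨u, hu⟩ := h
  induction k with
  | zero => simp
  | succ k ih =>
    obtain ⟨c, hc⟩ := ih
    refine ⟨(t - 1) * c - (-1) ^ k * k * u ^ 2, ?_⟩
    have hk : (t - 1) ^ k = (-1) ^ k * (1 - (k : ℤ) * t) + n ^ 2 * c := by linarith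
    rw [pow_succ, hk, hu]
    push_cast
    ring

theorem lerch_formula (p : ℕ) (hp : p.Prime) (hodd : Odd p) :
    ((p : ℤ) ^ 2) ∣ (∑ a ∈ Finset.Icc 1 (p - 1), (a : ℤ) ^ (p - 1)) - p
      - ((p - 1).factorial : ℤ) := by
  haveI : Fact p.Prime := ⟨hp⟩
  have hp2 : 2 ≤ p := hp.two_le
  set F : ℤ := ((p - 1).factorial : ℤ) with hF
  -- Wilson: p ∣ F + 1
  have hwilson : (p : ℤ) ∣ F + 1 := by
    have : ((F + 1 : ℤ) : ZMod p) = 0 := by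
      rw [hF]
      push_cast
      rw [ZMod.wilsons_lemma]
      ring
    exact_mod_cast (ZMod.intCast_zmod_eq_zero_iff_dvd _ _).mp this
  -- Fermat: for a ∈ Icc 1 (p-1), p ∣ a^(p-1) - 1
  have hfermat : ∀ a ∈ Finset.Icc 1 (p - 1), (p : ℤ) ∣ (a : ℤ) ^ (p - 1) - 1 := by
    intro a ha
    rw [Finset.mem_Icc] at ha
    have hane : (a : ZMod p) ≠ 0 := by
      rw [Ne, ZMod.natCast_eq_zero_iff]
      intro hdvd
      have := Nat.le_of_dvd (by omega) hdvd
      omega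
    have : (((a : ℤ) ^ (p - 1) - 1 : ℤ) : ZMod p) = 0 := by
      push_cast
      rw [ZMod.pow_card_sub_one_eq_one hane]
      ring
    exact_mod_cast (ZMod.intCast_zmod_eq_zero_iff_dvd _ _).mp this
  -- product of all a^(p-1) equals F^(p-1)
  have hn : (∏ x ∈ Finset.Icc 1 (p - 1), x) = (p - 1).factorial := by
    rw [← Finset.Ico_add_one_right_eq_Icc]
    exact Finset.prod_Ico_id_eq_factorial (p - 1)
  have hprod : (∏ a ∈ Finset.Icc 1 (p - 1), (a : ℤ) ^ (p - 1)) = F ^ (p - 1) := by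
    rw [Finset.prod_pow, hF, ← hn]
    push_cast
    ring
  -- product expansion mod p²
  have h1 : (p : ℤ) ^ 2 ∣ F ^ (p - 1)
      - (1 + ∑ a ∈ Finset.Icc 1 (p - 1), ((a : ℤ) ^ (p - 1) - 1)) := by
    rw [← hprod]
    exact lerch_prod_aux _ _ _ hfermat
  -- F^(p-1) = ((F+1)-1)^(p-1) ≡ 1 - (p-1)(F+1) ≡ F + 2 mod p²
  have heven : Even (p - 1) := by
    obtain ⟨k, hk⟩ := hodd
    exact ⟨k, by omega⟩
  have h2 : (p : ℤ) ^ 2 ∣ F ^ (p - 1) - (F + 2) := by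
    have hmain := lerch_pow_aux (p : ℤ) (F + 1) hwilson (p - 1)
    have hneg : ((-1 : ℤ)) ^ (p - 1) = 1 := heven.neg_one_pow
    rw [hneg, add_sub_cancel_right, one_mul] at hmain
    have hcast : ((p - 1 : ℕ) : ℤ) = (p : ℤ) - 1 := by
      push_cast [Nat.cast_sub (by omega : 1 ≤ p)]
      ring
    rw [hcast] at hmain
    obtain ⟨c, hc⟩ := hmain
    obtain ⟨d, hd⟩ := hwilson
    exact ⟨c - d, by linear_combination hc - (p : ℤ) * hd⟩
  -- combine
  have hsum : (∑ a ∈ Finset.Icc 1 (p - 1), ((a : ℤ) ^ (p - 1) - 1))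
      = (∑ a ∈ Finset.Icc 1 (p - 1), (a : ℤ) ^ (p - 1)) - ((p : ℤ) - 1) := by
    rw [Finset.sum_sub_distrib, Finset.sum_const, Nat.card_Icc, nsmul_eq_mul, mul_one]
    have h' : (p - 1 + 1 - 1 : ℕ) = p - 1 := by omega
    rw [h', Nat.cast_sub (by omega : 1 ≤ p)]
    norm_num
  rw [hsum] at h1
  obtain ⟨c, hc⟩ := h1
  obtain ⟨e, he⟩ := h2
  exact ⟨e - c, by linear_combination he - hc⟩
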